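/- Let (f_t)_{t≥0} be a Loewner chain of covering mappings with images Ω_t, evolution family (φ_{s,t}), and fix 0 ≤ s ≤ t. If the inclusion-induced homomorphism i*_{s,t} : π₁(Ω_s, 0) → π₁(Ω_t, 0) is surjective (hence an isomorphism, it being always injective), then every deck transformation F ∈ DT(f_t) satisfies F(0) ∈ φ_{s,t}(B) and consequently F(φ_{s,t}(B)) = φ_{s,t}(B). -/

import Mathlib

open CategoryTheory FundamentalGroupoid Metric Set

/-- The homomorphism induced on fundamental groups by a continuous map. -/
noncomputable def pi1map {X Y : Type} [TopologicalSpace X] [TopologicalSpace Y]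
    (φ : C(X, Y)) (x : X) :
    Aut (FundamentalGroupoid.mk x) →* Aut (FundamentalGroupoid.mk (φ x)) :=
  Functor.mapAut (FundamentalGroupoid.mk x)
    (πₘ (show TopCat.of X ⟶ TopCat.of Y from TopCat.ofHom φ) : FundamentalGroupoid X ⥤ FundamentalGroupoid Y)

/-- `f` restricted to `U` is a covering map onto `Ω`. -/
def IsCoveringOnto {E F : Type} [TopologicalSpace E] [TopologicalSpace F]
    (f : E → F) (U : Set E) (Ω : Set F) : Prop :=
  Set.SurjOn f U Ω ∧
    ∃ h : Set.MapsTo f U Ω, IsCoveringMap (Set.MapsTo.restrict f U Ω h)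



open scoped unitInterval

noncomputable section CoveringLifting

variable {E X : Type*} [TopologicalSpace E] [TopologicalSpace X] {p : E → X}

/-- affine path in the unit interval from `a` to `b`. -/
def affI (a b : I) (u : I) : I :=
  ⟨(1 - (u : ℝ)) * a + u * b, by
    constructor
    · nlinarith [a.2.1, b.2.1, u.2.1, u.2.2]
    · nlinarith [a.2.2, b.2.2, u.2.1, u.2.2]⟩

lemma affI_continuous (a b : I) : Continuous (affI a b) := by
  apply Continuous.subtype_mk
  fun_prop

@[simp] lemma affI_zero (a b : I) : affI a b 0 = a := by
  simp [affI]

@[simp] lemma affI_one (a b : I) : affI a b 1 = b := by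
  simp [affI]

lemma affI_mem_Icc {a b : I} (h : a ≤ b) (u : I) : affI a b u ∈ Set.Icc a b := by
  have h' : (a:ℝ) ≤ b := h
  constructor
  · show (a:ℝ) ≤ (1 - (u:ℝ)) * a + u * b
    nlinarith [u.2.1, u.2.2]
  · show (1 - (u:ℝ)) * a + u * b ≤ (b:ℝ)
    nlinarith [u.2.1, u.2.2]

lemma affI_dist (a b : I) (u : I) : dist (affI a b u) a ≤ dist b a := by
  rw [Subtype.dist_eq, Subtype.dist_eq, Real.dist_eq, Real.dist_eq]
  show |(1 - (u:ℝ)) * a + u * b - a| ≤ _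
  have : (1 - (u:ℝ)) * a + u * b - a = (u:ℝ) * (b - a) := by ring
  rw [this, abs_mul, abs_of_nonneg u.2.1]
  nlinarith [u.2.1, u.2.2, abs_nonneg ((b:ℝ) - a)]

/-- Uniqueness step: the value of a lift at the right end of a subinterval mapped
into the base set of a trivialization. -/
theorem IsCoveringMap.lift_interval_step (hp : IsCoveringMap p)
    {F' : Type*} [TopologicalSpace F'] (e : Bundle.Trivialization F' p)
    {γ : I → X} (hγ : Continuous γ) {Γ : I → E} (hΓ : Continuous Γ)
    (hΓp : ∀ t, p (Γ t) = γ t)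
    {t₁ t₂ : I} (h12 : t₁ ≤ t₂) (hbase : ∀ t, t₁ ≤ t → t ≤ t₂ → γ t ∈ e.baseSet) :
    Γ t₂ = e.toOpenPartialHomeomorph.symm (γ t₂, (e (Γ t₁)).2) := by
  set c := (e (Γ t₁)).2 with hc
  set sec : X → E := fun x => e.toOpenPartialHomeomorph.symm (x, c) with hsec
  have hmem : ∀ u : I, γ (affI t₁ t₂ u) ∈ e.baseSet := fun u =>
    hbase _ (affI_mem_Icc h12 u).1 (affI_mem_Icc h12 u).2
  have hsecOn : ContinuousOn sec e.baseSet := by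
    apply e.toOpenPartialHomeomorph.continuousOn_symm.comp
      ((continuous_id.prodMk continuous_const).continuousOn)
    intro x hx
    exact e.mem_target.2 hx
  have hg1 : Continuous (Γ ∘ affI t₁ t₂) := hΓ.comp (affI_continuous _ _)
  have hg2 : Continuous (sec ∘ γ ∘ affI t₁ t₂) :=
    hsecOn.comp_continuous (hγ.comp (affI_continuous _ _)) hmem
  have hpsec : ∀ x ∈ e.baseSet, p (sec x) = x := by
    intro x hx
    exact e.proj_symm_apply (e.mem_target.2 hx)
  have hsrc : Γ t₁ ∈ e.source := e.mem_source.2 (by rw [hΓp]; exact hbase t₁ le_rfl h12)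
  have hat0 : (Γ ∘ affI t₁ t₂) 0 = (sec ∘ γ ∘ affI t₁ t₂) 0 := by
    simp only [Function.comp_apply, affI_zero]
    have hpair : (p (Γ t₁), (e (Γ t₁)).2) = e (Γ t₁) := e.mk_proj_snd hsrc
    have h2 : sec (γ t₁) = Γ t₁ := by
      rw [← hΓp t₁]
      show e.toOpenPartialHomeomorph.symm (p (Γ t₁), (e (Γ t₁)).2) = Γ t₁
      rw [hpair]
      exact e.toOpenPartialHomeomorph.left_inv hsrc
    exact h2.symm
  have hcomp : p ∘ (Γ ∘ affI t₁ t₂) = p ∘ (sec ∘ γ ∘ affI t₁ t₂) := by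
    funext u
    simp only [Function.comp_apply]
    rw [hΓp, hpsec _ (hmem u)]
  have := hp.eq_of_comp_eq hg1 hg2 hcomp 0 hat0
  have h1 := congrFun this 1
  simpa using h1


/-- Extension of a partial lift across a subinterval contained in the base set of a
trivialization. -/
theorem Trivialization.lift_extend {F' : Type*} [TopologicalSpace F'] (e : Bundle.Trivialization F' p)
    {γ : I → X} (hγ : Continuous γ) {t₁ t₂ : I} (h12 : t₁ ≤ t₂)
    (hbase : ∀ t, t₁ ≤ t → t ≤ t₂ → γ t ∈ e.baseSet)
    {Γ : I → E} (hΓ : Continuous Γ) (hlift : ∀ s, s ≤ t₁ → p (Γ s) = γ s) :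
    ∃ Γ' : I → E, Continuous Γ' ∧ Γ' 0 = Γ 0 ∧ ∀ s, s ≤ t₂ → p (Γ' s) = γ s := by
  set c := (e (Γ t₁)).2 with hc
  set sec : X → E := fun x => e.toOpenPartialHomeomorph.symm (x, c) with hsec
  -- clamping map into [t₁, t₂]
  set ρ : I → I := fun s => ⟨max (min (s : ℝ) t₂) t₁, by
    constructor
    · exact le_trans t₁.2.1 (le_max_right (min (s : ℝ) (t₂ : ℝ)) (t₁ : ℝ))
    · exact max_le (le_trans (min_le_right _ _) t₂.2.2) t₁.2.2⟩ with hρ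
  have hρcont : Continuous ρ := by
    apply Continuous.subtype_mk
    exact (continuous_subtype_val.min continuous_const).max continuous_const
  have hρmem : ∀ s, t₁ ≤ ρ s ∧ ρ s ≤ t₂ := by
    intro s
    constructor
    · show (t₁ : ℝ) ≤ max (min (s : ℝ) (t₂ : ℝ)) (t₁ : ℝ)
      exact le_max_right _ _
    · show max (min (s : ℝ) (t₂ : ℝ)) (t₁ : ℝ) ≤ (t₂ : ℝ)
      exact max_le (min_le_right _ _) h12
  have hρeq : ∀ s : I, t₁ ≤ s → s ≤ t₂ → ρ s = s := by
    intro s h1 h2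
    apply Subtype.ext
    show max (min (s:ℝ) t₂) t₁ = s
    rw [min_eq_left (show (s:ℝ) ≤ (t₂:ℝ) from h2), max_eq_left (show (t₁:ℝ) ≤ (s:ℝ) from h1)]
  have hmem : ∀ s, γ (ρ s) ∈ e.baseSet := fun s => hbase _ (hρmem s).1 (hρmem s).2
  have hsecOn : ContinuousOn sec e.baseSet := by
    apply e.toOpenPartialHomeomorph.continuousOn_symm.comp
      ((continuous_id.prodMk continuous_const).continuousOn)
    intro x hx
    exact e.mem_target.2 hx
  have hpsec : ∀ x ∈ e.baseSet, p (sec x) = x := fun x hx =>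
    e.proj_symm_apply (e.mem_target.2 hx)
  have hsrc : Γ t₁ ∈ e.source := e.mem_source.2 (by rw [hlift t₁ le_rfl]; exact hbase t₁ le_rfl h12)
  have hfix : sec (γ t₁) = Γ t₁ := by
    rw [← hlift t₁ le_rfl]
    show e.toOpenPartialHomeomorph.symm (p (Γ t₁), (e (Γ t₁)).2) = Γ t₁
    rw [e.mk_proj_snd hsrc]
    exact e.toOpenPartialHomeomorph.left_inv hsrc
  have hρt₁ : ρ t₁ = t₁ := hρeq t₁ le_rfl h12
  refine ⟨fun s => if (s : ℝ) ≤ (t₁ : ℝ) then Γ s else sec (γ (ρ s)), ?_, ?_, ?_⟩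
  · apply Continuous.if_le hΓ (hsecOn.comp_continuous (hγ.comp hρcont) hmem)
      continuous_subtype_val continuous_const
    intro s hs
    have hst : s = t₁ := Subtype.ext hs
    subst hst
    show Γ s = sec (γ (ρ s))
    rw [hρt₁]
    exact hfix.symm
  · simp only [if_pos (show ((0:I) : ℝ) ≤ (t₁ : ℝ) from t₁.2.1)]
  · intro s hst2
    show p (if (s : ℝ) ≤ (t₁ : ℝ) then Γ s else sec (γ (ρ s))) = γ s
    by_cases h : (s : ℝ) ≤ (t₁ : ℝ)
    · rw [if_pos h]
      exact hlift s h
    · rw [if_neg h]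
      push_neg at h
      have h1 : t₁ ≤ s := le_of_lt h
      rw [hρeq s h1 hst2]
      exact hpsec _ (hbase s h1 hst2)

/-- Existence of path lifts through a covering map. -/
theorem IsCoveringMap.lift_path' (hp : IsCoveringMap p) {γ : I → X} (hγ : Continuous γ)
    (e₀ : E) (he : p e₀ = γ 0) :
    ∃ Γ : I → E, Continuous Γ ∧ Γ 0 = e₀ ∧ ∀ t, p (Γ t) = γ t := by
  obtain ⟨Γ, h1, h2⟩ := hp.exists_path_lifts ⟨γ, hγ⟩ e₀ he.symm
  exact ⟨Γ, Γ.continuous, h2, fun t => congrFun h1 t⟩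

/-- Endpoints of lifts of the slices of a homotopy (with constant right end) are constant. -/
theorem IsCoveringMap.homotopy_endpoint (hp : IsCoveringMap p)
    (H : C(I × I, X)) (h1 : ∀ s, H (s, 1) = H (0, 1))
    (Γ : I → I → E) (hΓc : ∀ s, Continuous (Γ s))
    (hΓp : ∀ s t, p (Γ s t) = H (s, t)) (e₀ : E) (hΓ0 : ∀ s, Γ s 0 = e₀)
    (s₀ s₁ : I) : Γ s₀ 1 = Γ s₁ 1 := by
  have hne : ∀ s t, Nonempty (p ⁻¹' {H (s, t)}) := fun s t => ⟨⟨Γ s t, hΓp s t⟩⟩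
  -- local constancy of the endpoint map
  have loc : ∀ a : I, ∃ δ > (0:ℝ), ∀ b : I, dist b a < δ → Γ b 1 = Γ a 1 := by
    intro a
    -- Lebesgue number for the strip {a} × I
    have hW : ∀ t' : I, IsOpen (H ⁻¹' (hp (H (a, t'))).toTrivialization.baseSet) := fun t' =>
      (hp (H (a, t'))).toTrivialization.open_baseSet.preimage H.continuous
    have hWcov : ({a} ×ˢ (univ : Set I)) ⊆
        ⋃ t' : I, H ⁻¹' (hp (H (a, t'))).toTrivialization.baseSet := by
      rintro ⟨s, t⟩ hst
      obtain ⟨hs, -⟩ := hst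
      rw [mem_singleton_iff] at hs
      subst hs
      exact mem_iUnion.2 ⟨t, (hp (H (s, t))).mem_toTrivialization_baseSet⟩
    obtain ⟨δ, hδ, hball⟩ := lebesgue_number_lemma_of_metric
      (isCompact_singleton.prod isCompact_univ) hW hWcov
    -- partition of the t-axis into δ/2-fine intervals
    have hopen : ∀ t' : I, IsOpen (ball t' (δ/2)) := fun t' => isOpen_ball
    have hcov : (univ : Set I) ⊆ ⋃ t' : I, ball t' (δ/2) := fun t _ =>
      mem_iUnion.2 ⟨t, mem_ball_self (by linarith)⟩
    obtain ⟨tt, ht0, hmono, ⟨m, hm⟩, hsub⟩ :=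
      exists_monotone_Icc_subset_open_cover_unitInterval hopen hcov
    choose tc htc using hsub
    have hsel : ∀ n : ℕ, ∃ t'' : I, ball ((a, tc n) : I × I) δ ⊆
        H ⁻¹' (hp (H (a, t''))).toTrivialization.baseSet := fun n =>
      hball (a, tc n) ⟨rfl, trivial⟩
    choose ti hti using hsel
    -- the trivialization used on the n-th strip
    refine ⟨δ/2, by linarith, fun b hb => ?_⟩
    have hbase : ∀ n : ℕ, ∀ u : I, ∀ t : I, t ∈ Icc (tt n) (tt (n+1)) →
        H (affI a b u, t) ∈ (hp (H (a, ti n))).toTrivialization.baseSet := by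
      intro n u t ht
      apply hti n
      rw [mem_ball, Prod.dist_eq]
      apply max_lt
      · calc dist (affI a b u) a ≤ dist b a := affI_dist a b u
          _ < δ/2 := hb
          _ < δ := by linarith
      · have := htc n ht
        rw [mem_ball] at this
        linarith [this]
    -- by induction, the map u ↦ Γ (l u) (tt n) is continuous
    have key : ∀ n : ℕ, Continuous fun u : I => Γ (affI a b u) (tt n) := by
      intro n
      induction n with
      | zero =>
        have : (fun u : I => Γ (affI a b u) (tt 0)) = fun _ => e₀ := by
          funext u
          rw [ht0, hΓ0]
        rw [this]
        exact continuous_const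
      | succ n ih =>
        set e := (hp (H (a, ti n))).toTrivialization with he
        have hsrc : ∀ u : I, Γ (affI a b u) (tt n) ∈ e.source := by
          intro u
          apply e.mem_source.2
          rw [hΓp]
          exact hbase n u (tt n) ⟨le_rfl, hmono (Nat.le_succ n)⟩
        have hsheet : Continuous fun u : I => (e (Γ (affI a b u) (tt n))).2 := by
          have h1 : ContinuousOn e e.source := e.toOpenPartialHomeomorph.continuousOn
          have h2 : Continuous (⇑e ∘ fun u : I => Γ (affI a b u) (tt n)) :=
            h1.comp_continuous ih hsrc
          exact h2.snd
        haveI : DiscreteTopology (p ⁻¹' {H (a, ti n)}) := (hp (H (a, ti n))).1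
        have hconst : ∀ u : I, (e (Γ (affI a b u) (tt n))).2 =
            (e (Γ (affI a b 0) (tt n))).2 := by
          intro u
          exact ((IsLocallyConstant.iff_continuous _).2 hsheet).apply_eq_of_preconnectedSpace u 0
        have hform : ∀ u : I, Γ (affI a b u) (tt (n+1)) =
            e.toOpenPartialHomeomorph.symm (H (affI a b u, tt (n+1)),
              (e (Γ (affI a b 0) (tt n))).2) := by
          intro u
          rw [← hconst u]
          exact hp.lift_interval_step e
            (H.continuous.comp (Continuous.prodMk_right _)) (hΓc (affI a b u))
            (fun t => hΓp (affI a b u) t) (hmono (Nat.le_succ n))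
            (fun t hta htb => hbase n u t ⟨hta, htb⟩)
        have : (fun u : I => Γ (affI a b u) (tt (n+1))) = fun u : I =>
            e.toOpenPartialHomeomorph.symm (H (affI a b u, tt (n+1)),
              (e (Γ (affI a b 0) (tt n))).2) := funext hform
        rw [this]
        apply e.toOpenPartialHomeomorph.continuousOn_symm.comp_continuous
        · apply Continuous.prodMk
          · exact H.continuous.comp ((affI_continuous a b).prodMk continuous_const)
          · exact continuous_const
        · intro u
          apply e.mem_target.2
          exact hbase n u (tt (n+1)) ⟨hmono (Nat.le_succ n), le_rfl⟩
    -- conclude: the endpoint map along the segment is a lift of a constant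
    have hend : Continuous fun u : I => Γ (affI a b u) 1 := by
      have := key m
      rwa [hm m le_rfl] at this
    have := hp.const_of_comp hend (fun u u' => by
      show p (Γ (affI a b u) 1) = p (Γ (affI a b u') 1)
      rw [hΓp, hΓp, h1 (affI a b u), h1 (affI a b u')]) 1 0
    calc Γ b 1 = Γ (affI a b 1) 1 := by rw [affI_one]
      _ = Γ (affI a b 0) 1 := this
      _ = Γ a 1 := by rw [affI_zero]
  -- locally constant implies constant
  have hlc : IsLocallyConstant fun s : I => Γ s 1 := by
    rw [IsLocallyConstant.iff_exists_open]
    intro s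
    obtain ⟨δ, hδ, hloc⟩ := loc s
    exact ⟨ball s δ, isOpen_ball, mem_ball_self hδ, fun b hb => hloc b hb⟩
  exact hlc.apply_eq_of_preconnectedSpace s₀ s₁

end CoveringLifting


/-- if the inclusion-induced map `π₁(Ω_s,0) → π₁(Ω_t,0)` is surjective,
then every deck transformation `F` of `f_t` satisfies `F(0) ∈ φ_{s,t}(B)`, and hence
`F(φ_{s,t}(B)) = φ_{s,t}(B)`. -/
theorem deck_preserves_evolution_image_of_pi1_surjective
    {E : Type} [NormedAddCommGroup E] [NormedSpace ℂ E] [FiniteDimensional ℂ E]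
    (Ωs Ωt : Set E) (h0s : (0 : E) ∈ Ωs) (hsub : Ωs ⊆ Ωt)
    (fs ft : E → E)
    (hfshol : DifferentiableOn ℂ fs (ball (0 : E) 1))
    (hfthol : DifferentiableOn ℂ ft (ball (0 : E) 1))
    (hfscov : IsCoveringOnto fs (ball (0 : E) 1) Ωs)
    (hftcov : IsCoveringOnto ft (ball (0 : E) 1) Ωt)
    (hfs0 : fs 0 = 0) (hft0 : ft 0 = 0)
    (φ : E → E)
    (hφhol : DifferentiableOn ℂ φ (ball (0 : E) 1))
    (hφmaps : Set.MapsTo φ (ball (0 : E) 1) (ball (0 : E) 1))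
    (hφinj : Set.InjOn φ (ball (0 : E) 1))
    (hφ0 : φ 0 = 0)
    (hφlift : ∀ z ∈ ball (0 : E) 1, ft (φ z) = fs z)
    (hsurj : Function.Surjective
      (pi1map (⟨Set.inclusion hsub, continuous_inclusion hsub⟩ : C(Ωs, Ωt))
        (⟨0, h0s⟩ : Ωs))) :
    ∀ F : E → E,
      Set.BijOn F (ball (0 : E) 1) (ball (0 : E) 1) →
      DifferentiableOn ℂ F (ball (0 : E) 1) →
      (∀ z ∈ ball (0 : E) 1, ft (F z) = ft z) →
      F 0 ∈ φ '' ball (0 : E) 1 ∧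
        F '' (φ '' ball (0 : E) 1) = φ '' ball (0 : E) 1 := by
  intro F hFbij hFdiff hFdeck
  obtain ⟨hms, hq⟩ := hfscov.2
  obtain ⟨hmt, hpt⟩ := hftcov.2
  set p := Set.MapsTo.restrict ft (ball (0:E) 1) Ωt hmt with hpdef
  set q := Set.MapsTo.restrict fs (ball (0:E) 1) Ωs hms with hqdef
  have mem0B : (0:E) ∈ ball (0:E) 1 := mem_ball_self one_pos
  set b0 : ↥(ball (0:E) 1) := ⟨0, mem0B⟩ with hb0
  have hline : ∀ w : E, w ∈ ball (0:E) 1 → ∀ t : I, (t:ℝ) • w ∈ ball (0:E) 1 := by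
    intro w hw t
    rw [mem_ball_zero_iff] at hw ⊢
    rw [norm_smul, Real.norm_eq_abs, abs_of_nonneg t.2.1]
    nlinarith [t.2.1, t.2.2, norm_nonneg w]
  have hφcont := hφhol.continuousOn
  have hFcont := hFdiff.continuousOn
  -- the set of endpoints of lifts (through ft) of paths in Ωs starting at 0
  set InA : ↥(ball (0:E) 1) → Prop :=
    fun w => ∃ α : Path b0 w, ∀ t, ft ((α t : E)) ∈ Ωs with hInA
  -- every point of φ '' B is such an endpoint
  have hφA : ∀ z (hz : z ∈ ball (0:E) 1), InA ⟨φ z, hφmaps hz⟩ := by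
    intro z hz
    have hc : Continuous fun t : I => (⟨φ ((t:ℝ) • z), hφmaps (hline z hz t)⟩ : ↥(ball (0:E) 1)) := by
      apply Continuous.subtype_mk
      exact hφcont.comp_continuous (continuous_subtype_val.smul continuous_const)
        (fun t => hline z hz t)
    refine ⟨⟨⟨fun t => ⟨φ ((t:ℝ) • z), hφmaps (hline z hz t)⟩, hc⟩, ?_, ?_⟩, ?_⟩
    · apply Subtype.ext
      show φ (((0:I):ℝ) • z) = (0:E)
      norm_num [hφ0]
    · apply Subtype.ext
      show φ (((1:I):ℝ) • z) = φ z
      norm_num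
    · intro t
      show ft (φ ((t:ℝ) • z)) ∈ Ωs
      rw [hφlift _ (hline z hz t)]
      exact hms (hline z hz t)
  -- conversely, every such endpoint is in φ '' B
  have hAφ : ∀ w : ↥(ball (0:E) 1), InA w → (w : E) ∈ φ '' ball (0:E) 1 := by
    intro w hw
    obtain ⟨α, hα⟩ := hw
    have hδc : Continuous fun t : I => (⟨ft ((α t : E)), hα t⟩ : ↥Ωs) := by
      apply Continuous.subtype_mk
      exact (hpt.continuous.comp α.continuous).subtype_val
    have hstart : q b0 = (⟨ft ((α 0 : E)), hα 0⟩ : ↥Ωs) := by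
      apply Subtype.ext
      show fs 0 = ft ((α 0 : E))
      rw [α.source]
      show fs 0 = ft (0:E)
      rw [hfs0, hft0]
    obtain ⟨Γ, hΓc, hΓ0, hΓp⟩ := hq.lift_path' hδc b0 hstart
    set β : I → ↥(ball (0:E) 1) := fun t => ⟨φ ((Γ t : E)), hφmaps (Γ t).2⟩ with hβ
    have hβc : Continuous β := by
      apply Continuous.subtype_mk
      exact hφcont.comp_continuous hΓc.subtype_val (fun t => (Γ t).2)
    have hcomp : p ∘ β = p ∘ (α : I → ↥(ball (0:E) 1)) := by
      funext t
      apply Subtype.ext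
      show ft (φ ((Γ t : E))) = ft ((α t : E))
      rw [hφlift _ (Γ t).2]
      exact congrArg Subtype.val (hΓp t)
    have h00 : β 0 = α 0 := by
      apply Subtype.ext
      show φ ((Γ 0 : E)) = ((α 0 : E))
      rw [hΓ0, α.source]
      exact hφ0
    have heq := hpt.eq_of_comp_eq hβc α.continuous hcomp 0 h00
    have h1 : β 1 = α 1 := congrFun heq 1
    rw [α.target] at h1
    exact ⟨(Γ 1 : E), (Γ 1).2, congrArg Subtype.val h1⟩
  -- Part M2 : F 0 is the endpoint of a lift of a loop in Ωs
  have hF0B : F 0 ∈ ball (0:E) 1 := hFbij.mapsTo mem0B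
  have h0t : (0:E) ∈ Ωt := hsub h0s
  set ι : C(↥Ωs, ↥Ωt) := ⟨Set.inclusion hsub, continuous_inclusion hsub⟩ with hι
  set pt : ↥Ωt := ι ⟨0, h0s⟩ with hptt
  set seg : I → ↥(ball (0:E) 1) := fun t => ⟨(t:ℝ) • F 0, hline _ hF0B t⟩ with hseg
  have hsegc : Continuous seg :=
    Continuous.subtype_mk (continuous_subtype_val.smul continuous_const) _
  have hseg0 : seg 0 = b0 := by
    apply Subtype.ext
    show ((0:I):ℝ) • F 0 = (0:E)
    norm_num
  have hγsrc : p (seg 0) = pt := by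
    rw [hseg0]
    apply Subtype.ext
    exact hft0
  have hγtgt : p (seg 1) = pt := by
    apply Subtype.ext
    show ft (((1:I):ℝ) • F 0) = (0:E)
    rw [show ((1:I):ℝ) • F 0 = F 0 by norm_num]
    rw [hFdeck 0 mem0B, hft0]
  set γ : Path pt pt :=
    { toFun := fun t => p (seg t)
      continuous_toFun := hpt.continuous.comp hsegc
      source' := hγsrc
      target' := hγtgt } with hγdef
  have hγQ : ∃ gq : Aut (FundamentalGroupoid.mk (ι ⟨0, h0s⟩)), gq.hom = ⟦γ⟧ := by
    refine ⟨⟨⟦γ⟧, Groupoid.inv ⟦γ⟧, ?_, ?_⟩, rfl⟩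
    · exact Groupoid.comp_inv _
    · exact Groupoid.inv_comp _
  obtain ⟨gq, hgqhom⟩ := hγQ
  obtain ⟨g, hg⟩ := hsurj gq
  obtain ⟨d, hd⟩ := Quotient.exists_rep
    (g.hom : Path.Homotopic.Quotient (⟨0, h0s⟩ : ↥Ωs) (⟨0, h0s⟩ : ↥Ωs))
  have hg' : (πₘ (show TopCat.of ↥Ωs ⟶ TopCat.of ↥Ωt from TopCat.ofHom ι)).map g.hom
      = (⟦γ⟧ : Path.Homotopic.Quotient pt pt) := by
    have h := congrArg Iso.hom hg
    rw [hgqhom] at h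
    exact h
  rw [← hd] at hg'
  have hg'' : (⟦d.map ι.continuous⟧ : Path.Homotopic.Quotient pt pt) = ⟦γ⟧ := hg'
  have hhom : Path.Homotopic (d.map ι.continuous) γ := Quotient.exact hg''
  obtain ⟨H⟩ := hhom
  have h0S : (0:I) ∈ ({0, 1} : Set I) := Set.mem_insert _ _
  have h1S : (1:I) ∈ ({0, 1} : Set I) := Set.mem_insert_iff.2 (Or.inr rfl)
  have hstart : ∀ s : I, p b0 = H.toContinuousMap (s, 0) := by
    intro s
    have h1 : H.toContinuousMap (s, 0) = (d.map ι.continuous) 0 := H.eq_fst s h0S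
    rw [h1, (d.map ι.continuous).source]
    apply Subtype.ext
    exact hft0
  have hslice : ∀ s : I, Continuous fun t : I => H.toContinuousMap (s, t) :=
    fun s => H.continuous.comp (Continuous.prodMk_right s)
  choose Γ hΓc hΓ0 hΓp using fun s : I =>
    hpt.lift_path' (hslice s) b0 (hstart s)
  have hEnd : Γ 0 1 = Γ 1 1 := by
    apply hpt.homotopy_endpoint H.toContinuousMap _ Γ hΓc hΓp b0 hΓ0
    intro s
    have e1 : H.toContinuousMap (s, 1) = (d.map ι.continuous) 1 := H.eq_fst s h1S
    have e2 : H.toContinuousMap (0, 1) = (d.map ι.continuous) 1 := H.eq_fst 0 h1S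
    rw [e1, e2]
  have hΓ1 : Γ 1 = seg := by
    apply hpt.eq_of_comp_eq (hΓc 1) hsegc _ 0 (by rw [hΓ0 1, hseg0])
    funext t
    show p (Γ 1 t) = p (seg t)
    rw [hΓp 1 t]
    exact H.apply_one t
  have hInAF0 : InA ⟨F 0, hF0B⟩ := by
    have htgt : Γ 0 1 = (⟨F 0, hF0B⟩ : ↥(ball (0:E) 1)) := by
      rw [hEnd, hΓ1]
      apply Subtype.ext
      show ((1:I):ℝ) • F 0 = F 0
      norm_num
    refine ⟨⟨⟨Γ 0, hΓc 0⟩, hΓ0 0, htgt⟩, ?_⟩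
    intro t
    show ft ((Γ 0 t : E)) ∈ Ωs
    have h1 : p (Γ 0 t) = H.toContinuousMap (0, t) := hΓp 0 t
    have h2 : H.toContinuousMap (0, t) = (d.map ι.continuous) t := H.apply_zero t
    have h3 : ft ((Γ 0 t : E)) = ((d.map ι.continuous) t : E) := by
      rw [← h2, ← h1]
      rfl
    rw [h3, Path.map_coe]
    exact (d t).2
  refine ⟨hAφ _ hInAF0, ?_⟩
  obtain ⟨βp, hβp⟩ := hInAF0
  apply Subset.antisymm
  · rintro x ⟨y, ⟨z, hz, rfl⟩, rfl⟩
    have hFφzB : F (φ z) ∈ ball (0:E) 1 := hFbij.mapsTo (hφmaps hz)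
    obtain ⟨α, hα⟩ := hφA z hz
    have hFαc : Continuous fun t : I =>
        (⟨F ((α t : E)), hFbij.mapsTo (α t).2⟩ : ↥(ball (0:E) 1)) :=
      Continuous.subtype_mk
        (hFcont.comp_continuous α.continuous.subtype_val fun t => (α t).2) _
    set Fα : Path (⟨F 0, hF0B⟩ : ↥(ball (0:E) 1)) ⟨F (φ z), hFφzB⟩ :=
      { toFun := fun t => ⟨F ((α t : E)), hFbij.mapsTo (α t).2⟩
        continuous_toFun := hFαc
        source' := by
          apply Subtype.ext
          show F ((α 0 : E)) = F 0
          rw [α.source]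
        target' := by
          apply Subtype.ext
          show F ((α 1 : E)) = F (φ z)
          rw [α.target] } with hFαdef
    refine hAφ ⟨F (φ z), hFφzB⟩ ⟨βp.trans Fα, ?_⟩
    intro t
    have hmem : (βp.trans Fα) t ∈ range βp ∪ range Fα := by
      rw [← Path.trans_range]
      exact mem_range_self t
    rcases hmem with ⟨u, hu⟩ | ⟨u, hu⟩
    · rw [← hu]
      exact hβp u
    · rw [← hu]
      show ft (F ((α u : E))) ∈ Ωs
      rw [hFdeck _ (α u).2]
      exact hα u
  · rintro x ⟨z, hz, rfl⟩
    obtain ⟨v, hvB, hFv⟩ := hFbij.surjOn (hφmaps hz)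
    obtain ⟨α, hα⟩ := hφA z hz
    set ζ : Path (⟨F 0, hF0B⟩ : ↥(ball (0:E) 1)) ⟨φ z, hφmaps hz⟩ := βp.symm.trans α with hζdef
    have hζ : ∀ t, ft ((ζ t : E)) ∈ Ωs := by
      intro t
      have hmem : ζ t ∈ range βp.symm ∪ range α := by
        rw [← Path.trans_range]
        exact mem_range_self t
      rw [Path.symm_range] at hmem
      rcases hmem with ⟨u, hu⟩ | ⟨u, hu⟩
      · rw [← hu]
        exact hβp u
      · rw [← hu]
        exact hα u
    have hdpc : Continuous fun t : I => (⟨ft ((ζ t : E)), hζ t⟩ : ↥Ωs) :=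
      Continuous.subtype_mk (hpt.continuous.comp ζ.continuous).subtype_val _
    have hstart2 : q b0 = (⟨ft ((ζ 0 : E)), hζ 0⟩ : ↥Ωs) := by
      apply Subtype.ext
      show fs 0 = ft ((ζ 0 : E))
      rw [ζ.source]
      show fs 0 = ft (F 0)
      rw [hfs0, hFdeck 0 mem0B, hft0]
    obtain ⟨η, hηc, hη0, hηp⟩ := hq.lift_path' hdpc b0 hstart2
    have hφηc : Continuous fun t : I => φ ((η t : E)) :=
      hφcont.comp_continuous hηc.subtype_val fun t => (η t).2
    set Fη : I → ↥(ball (0:E) 1) :=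
      fun t => ⟨F (φ ((η t : E))), hFbij.mapsTo (hφmaps (η t).2)⟩ with hFηdef
    have hFηc : Continuous Fη :=
      Continuous.subtype_mk
        (hFcont.comp_continuous hφηc fun t => hφmaps (η t).2) _
    have hcomp2 : p ∘ Fη = p ∘ (ζ : I → ↥(ball (0:E) 1)) := by
      funext t
      apply Subtype.ext
      show ft (F (φ ((η t : E)))) = ft ((ζ t : E))
      rw [hFdeck _ (hφmaps (η t).2), hφlift _ (η t).2]
      exact congrArg Subtype.val (hηp t)
    have h02 : Fη 0 = ζ 0 := by
      apply Subtype.ext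
      show F (φ ((η 0 : E))) = ((ζ 0 : E))
      rw [hη0, ζ.source]
      show F (φ (0:E)) = F 0
      rw [hφ0]
    have heq2 := hpt.eq_of_comp_eq hFηc ζ.continuous hcomp2 0 h02
    have h12 : Fη 1 = ζ 1 := congrFun heq2 1
    have hval : F (φ ((η 1 : E))) = φ z := by
      have h := congrArg Subtype.val h12
      rw [ζ.target] at h
      exact h
    have hvφ : φ ((η 1 : E)) = v :=
      hFbij.injOn (hφmaps (η 1).2) hvB (by rw [hval, hFv])
    exact ⟨v, ⟨(η 1 : E), (η 1).2, hvφ⟩, hFv⟩
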